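/- Let N ≥ 5, τ = (N−4)/(N−2), let 0 < a < b and L₀ > 0. There exists a constant C > 0, depending only on N, a, L₀, such that for every integer k ≥ 1, every λ ≥ L₀ k^{(N−2)/(N−4)}, every r ∈ [a,b], every ȳ″ ∈ ℝ^{N−2} and every y ∈ ℝ^N, one has Σ_{j=1}^k (1+λ|y−x_j|)^{−τ} ≤ C. -/

import Mathlib

open Real MeasureTheory Finset

noncomputable section

abbrev E (N : ℕ) := EuclideanSpace ℝ (Fin N)

/-- The standard bubble `w_{x,λ}(y) = (N(N-2))^{(N-2)/4} (λ/(1+λ²|y-x|²))^{(N-2)/2}`. -/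
def bubble (N : ℕ) (x : E N) (l : ℝ) (y : E N) : ℝ :=
  ((N : ℝ) * ((N : ℝ) - 2)) ^ (((N : ℝ) - 2) / 4) *
    (l / (1 + l ^ 2 * ‖y - x‖ ^ 2)) ^ (((N : ℝ) - 2) / 2)

/-- The points on the regular `k`-polygon (0-indexed: `pt N k r y2 j` is `x_{j+1}`). -/
def pt (N k : ℕ) (r : ℝ) (y2 : E (N - 2)) (j : ℕ) : E N :=
  (EuclideanSpace.equiv (Fin N) ℝ).symm fun i =>
    if h0 : (i : ℕ) = 0 then r * Real.cos (2 * Real.pi * j / k)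
    else if h1 : (i : ℕ) = 1 then r * Real.sin (2 * Real.pi * j / k)
    else y2 ⟨(i : ℕ) - 2, by have := i.2; omega⟩

/-- `τ = (N-4)/(N-2)`. -/
def tau (N : ℕ) : ℝ := ((N : ℝ) - 4) / ((N : ℝ) - 2)

/- ### Auxiliary lemmas -/

lemma sum_icc_rpow_le (τ : ℝ) (hτ0 : 0 < τ) (hτ1 : τ < 1) (k : ℕ) (hk : 1 ≤ k) :
    ∑ m ∈ Finset.Icc 1 k, ((m:ℝ)) ^ (-τ) ≤ (1 + 1/(1-τ)) * (k:ℝ) ^ (1-τ) := by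
  have hτ1' : 0 < 1 - τ := by linarith
  have hanti : AntitoneOn (fun x : ℝ => x ^ (-τ)) (Set.Icc ((1:ℕ):ℝ) (k:ℕ)) := by
    intro x hx y hy hxy
    have : (0:ℝ) < x := lt_of_lt_of_le one_pos (by exact_mod_cast hx.1)
    exact Real.rpow_le_rpow_of_nonpos this hxy (by linarith)
  have hint := AntitoneOn.sum_le_integral_Ico (f := fun x : ℝ => x ^ (-τ)) hk hanti
  simp only [Nat.cast_one] at hint
  have hintval : ∫ x in (1:ℝ)..(k:ℝ), x ^ (-τ) = ((k:ℝ) ^ (1-τ) - 1)/(1-τ) := by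
    rw [integral_rpow (Or.inl (by linarith))]
    norm_num
    ring_nf
  rw [hintval] at hint
  have hsplit : ∑ m ∈ Finset.Icc 1 k, ((m:ℝ)) ^ (-τ)
      = 1 + ∑ i ∈ Finset.Ico 1 k, (((i:ℕ)+1:ℕ):ℝ) ^ (-τ) := by
    have e1 : Finset.Icc 1 k = Finset.Ico 1 (k+1) := by rw [Finset.Ico_add_one_right_eq_Icc]
    rw [e1, Finset.sum_Ico_eq_sum_range, Finset.sum_Ico_eq_sum_range]
    have e2 : k + 1 - 1 = (k - 1) + 1 := by omega
    rw [e2, Finset.sum_range_succ']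
    have e3 : ∀ i, ((1 + (i+1) : ℕ):ℝ) ^ (-τ) = (((1+i) + 1 : ℕ):ℝ) ^ (-τ) := by
      intro i; ring_nf
    simp only [e3]
    norm_num [add_comm]
  rw [hsplit]
  have hk1 : (1:ℝ) ≤ (k:ℝ) ^ (1-τ) :=
    Real.one_le_rpow (by exact_mod_cast hk) (by linarith)
  have h3 : ((k:ℝ) ^ (1-τ) - 1)/(1-τ) ≤ (k:ℝ) ^ (1-τ) * (1/(1-τ)) := by
    rw [mul_one_div]; gcongr; linarith
  have := hint.trans h3
  nlinarith [this, hk1]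

lemma pt_dist (N k : ℕ) (hN : 5 ≤ N) (r : ℝ) (hr : 0 ≤ r) (y2 : E (N-2)) (i j : ℕ) :
    ‖pt N k r y2 i - pt N k r y2 j‖ = 2 * r * |Real.sin (Real.pi * ((i:ℝ) - j) / k)| := by
  set A := 2 * Real.pi * i / k with hA
  set B := 2 * Real.pi * j / k with hB
  have h0 : (0:ℕ) < N := by omega
  have h1 : (1:ℕ) < N := by omega
  set i0 : Fin N := ⟨0, h0⟩
  set i1 : Fin N := ⟨1, h1⟩
  have hne : i0 ≠ i1 := by simp [i0, i1, Fin.ext_iff]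
  rw [EuclideanSpace.norm_eq]
  have hsum : ∑ l, ‖(pt N k r y2 i - pt N k r y2 j) l‖^2
      = (r*Real.cos A - r*Real.cos B)^2 + (r*Real.sin A - r*Real.sin B)^2 := by
    rw [← Finset.sum_subset (Finset.subset_univ ({i0, i1} : Finset (Fin N)))]
    · rw [Finset.sum_pair hne]
      simp [pt, i0, i1, Real.norm_eq_abs, sq_abs, PiLp.sub_apply]
      rw [hA, hB]
    · intro l _ hl
      simp only [Finset.mem_insert, Finset.mem_singleton] at hl
      push_neg at hl
      have hl0 : (l:ℕ) ≠ 0 := fun h => hl.1 (Fin.ext h)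
      have hl1 : (l:ℕ) ≠ 1 := fun h => hl.2 (Fin.ext h)
      simp [pt, hl0, hl1, PiLp.sub_apply]
  rw [hsum]
  have hAB : A - B = 2 * (Real.pi * ((i:ℝ) - j) / k) := by rw [hA, hB]; ring
  have h2 : Real.sin (Real.pi * ((i:ℝ)-j) / k) ^2 = (1 - Real.cos (A-B))/2 := by
    rw [hAB, Real.cos_two_mul]
    have := Real.sin_sq_add_cos_sq (Real.pi * ((i:ℝ)-j) / k)
    linarith
  have hkey : (r*Real.cos A - r*Real.cos B)^2 + (r*Real.sin A - r*Real.sin B)^2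
      = (2*r*|Real.sin (Real.pi * ((i:ℝ)-j)/k)|)^2 := by
    have pA := Real.sin_sq_add_cos_sq A
    have pB := Real.sin_sq_add_cos_sq B
    have hc : Real.cos (A - B) = Real.cos A * Real.cos B + Real.sin A * Real.sin B :=
      Real.cos_sub A B
    have habs2 : |Real.sin (Real.pi * ((i:ℝ)-j)/k)|^2
        = (1 - (Real.cos A * Real.cos B + Real.sin A * Real.sin B))/2 := by
      rw [sq_abs, h2, hc]
    linear_combination r^2*pA + r^2*pB - 4*r^2*habs2
  rw [hkey, Real.sqrt_sq (by positivity)]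

lemma sin_pi_nat_nonneg (k m : ℕ) (hm : m ≤ k) (hk : 1 ≤ k) :
    0 ≤ Real.sin (Real.pi * m / k) := by
  have hk0 : (0:ℝ) < k := by exact_mod_cast hk
  apply Real.sin_nonneg_of_nonneg_of_le_pi
  · positivity
  · rw [div_le_iff₀ hk0]
    have : (m:ℝ) ≤ k := by exact_mod_cast hm
    nlinarith [Real.pi_pos]

lemma abs_sin_eq (k i j : ℕ) (hi : i < k) (hj : j < k) (hk : 1 ≤ k) :
    |Real.sin (Real.pi * ((i:ℝ) - j) / k)| = Real.sin (Real.pi * (Nat.dist i j) / k) := by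
  rcases le_total j i with h | h
  · have hd : (Nat.dist i j : ℝ) = (i:ℝ) - j := by
      have h2 : Nat.dist i j = i - j := Nat.dist_eq_sub_of_le_right h
      rw [h2]; push_cast [h]; ring
    rw [hd]
    apply abs_of_nonneg
    have := sin_pi_nat_nonneg k (Nat.dist i j) (by have := Nat.dist_eq_sub_of_le_right h; omega) hk
    rwa [hd] at this
  · have hd : (Nat.dist i j : ℝ) = (j:ℝ) - i := by
      have h2 : Nat.dist i j = j - i := Nat.dist_eq_sub_of_le h
      rw [h2]; push_cast [h]; ring
    have he : Real.pi * ((i:ℝ) - j) / k = -(Real.pi * ((j:ℝ) - i) / k) := by ring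
    rw [he, Real.sin_neg, abs_neg, hd]
    apply abs_of_nonneg
    have := sin_pi_nat_nonneg k (Nat.dist i j) (by have := Nat.dist_eq_sub_of_le h; omega) hk
    rwa [hd] at this

lemma sin_lower (k m : ℕ) (hm1 : 1 ≤ m) (hmk : m < k) :
    (2:ℝ) * (min m (k-m) : ℕ) / k ≤ Real.sin (Real.pi * m / k) := by
  have hk0 : (0:ℝ) < k := by exact_mod_cast Nat.lt_of_le_of_lt (Nat.zero_le m) hmk
  have hpi := Real.pi_pos
  rcases le_total (2*m) k with h | h
  · have hd : min m (k-m) = m := by omega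
    rw [hd]
    have h' : 2*(m:ℝ) ≤ k := by exact_mod_cast h
    have := Real.mul_le_sin (x := Real.pi * m / k) (by positivity)
      (by rw [div_le_div_iff₀ hk0 two_pos]; nlinarith)
    calc (2:ℝ) * m / k = 2 / Real.pi * (Real.pi * m / k) := by field_simp
    _ ≤ _ := this
  · have hd : min m (k-m) = k - m := by omega
    rw [hd]
    have hmk' : ((k - m : ℕ):ℝ) = (k:ℝ) - m := by push_cast [le_of_lt hmk]; ring
    have heq : Real.pi * m / k = Real.pi - Real.pi * ((k - m:ℕ):ℝ) / k := by
      rw [hmk']; field_simp; ring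
    rw [heq, Real.sin_pi_sub]
    have h' : (k:ℝ) ≤ 2*m := by exact_mod_cast h
    have h2 : (2:ℝ)*(k-m:ℕ) ≤ k := by rw [hmk']; linarith
    have := Real.mul_le_sin (x := Real.pi * ((k-m:ℕ):ℝ) / k) (by positivity)
      (by rw [div_le_div_iff₀ hk0 two_pos]; nlinarith)
    calc (2:ℝ) * (k-m:ℕ) / k = 2 / Real.pi * (Real.pi * ((k-m:ℕ):ℝ) / k) := by field_simp
    _ ≤ _ := this

lemma sum_injOn_le (τ : ℝ) (k : ℕ) (s : Finset ℕ) (e : ℕ → ℕ)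
    (hinj : ∀ x ∈ s, ∀ y ∈ s, e x = e y → x = y)
    (hmaps : ∀ j ∈ s, e j ∈ Finset.Icc 1 k) :
    ∑ j ∈ s, ((e j : ℕ):ℝ) ^ (-τ) ≤ ∑ m ∈ Finset.Icc 1 k, ((m:ℝ)) ^ (-τ) := by
  calc ∑ j ∈ s, ((e j : ℕ):ℝ) ^ (-τ) = ∑ m ∈ s.image e, ((m:ℕ):ℝ) ^ (-τ) :=
        (Finset.sum_image (f := fun m : ℕ => ((m:ℕ):ℝ) ^ (-τ)) (g := e) hinj).symm
  _ ≤ ∑ m ∈ Finset.Icc 1 k, ((m:ℝ)) ^ (-τ) := by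
      apply Finset.sum_le_sum_of_subset_of_nonneg
      · intro m hm
        obtain ⟨j, hj, rfl⟩ := Finset.mem_image.mp hm
        exact hmaps j hj
      · intro m _ _
        positivity

/-- Uniform boundedness of the weight sum with exponent `τ`. -/
theorem weight_sum_tau_bounded (N : ℕ) (hN : 5 ≤ N) (a b L0 : ℝ)
    (ha : 0 < a) (hab : a < b) (hL0 : 0 < L0) :
    ∃ C : ℝ, 0 < C ∧ ∀ k : ℕ, 1 ≤ k →
      ∀ l : ℝ, L0 * (k : ℝ) ^ (((N : ℝ) - 2) / ((N : ℝ) - 4)) ≤ l →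
      ∀ r : ℝ, r ∈ Set.Icc a b → ∀ y2 : E (N - 2), ∀ y : E N,
        (∑ j ∈ Finset.range k, (1 + l * ‖y - pt N k r y2 j‖) ^ (-(tau N))) ≤ C := by
  have hN5 : (5:ℝ) ≤ (N:ℝ) := by exact_mod_cast hN
  have hN2 : (0:ℝ) < (N:ℝ) - 2 := by linarith
  have hN4 : (0:ℝ) < (N:ℝ) - 4 := by linarith
  set τ := tau N with hτdef
  have hτ0 : 0 < τ := div_pos hN4 hN2
  have hτ1 : τ < 1 := by rw [hτdef, tau, div_lt_one hN2]; linarith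
  have hτ1' : 0 < 1 - τ := by linarith
  refine ⟨1 + 4 * (2*a*L0)^(-τ) * (1 + 1/(1-τ)), by positivity, ?_⟩
  intro k hk l hl r hr y2 y
  set c1 := (2*a*L0)^(-τ) with hc1
  have hc1pos : 0 < c1 := Real.rpow_pos_of_pos (by positivity) _
  have hk0 : (0:ℝ) < k := by exact_mod_cast hk
  have hl0 : 0 < l := lt_of_lt_of_le (by positivity) hl
  obtain ⟨j₀, hj₀mem, hj₀min⟩ := Finset.exists_min_image (Finset.range k)
    (fun j => ‖y - pt N k r y2 j‖) ⟨0, Finset.mem_range.mpr hk⟩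
  have hj₀k : j₀ < k := Finset.mem_range.mp hj₀mem
  have hdist : ∀ x y : ℕ, Nat.dist x y = x - y + (y - x) := fun x y => rfl
  -- the key pointwise bound
  have key : ∀ j < k, j ≠ j₀ →
      (1 + l * ‖y - pt N k r y2 j‖) ^ (-τ)
        ≤ c1 * (k:ℝ)^(τ-1) *
          (((Nat.dist j j₀ : ℕ):ℝ)^(-τ) + (((k - Nat.dist j j₀ : ℕ)):ℝ)^(-τ)) := by
    intro j hjk hjne
    set m := Nat.dist j j₀ with hm
    have hm1 : 1 ≤ m := by rw [hm, hdist]; omega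
    have hmk : m < k := by rw [hm, hdist]; omega
    set d := min m (k - m) with hd
    have hd1 : 1 ≤ d := by omega
    have hdpos : (0:ℝ) < d := by exact_mod_cast Nat.lt_of_lt_of_le Nat.zero_lt_one hd1
    have hsin := sin_lower k m hm1 hmk
    have habs := abs_sin_eq k j j₀ hjk hj₀k hk
    have hra : a ≤ r := hr.1
    have hnorm := pt_dist N k hN r (le_trans ha.le hra) y2 j j₀
    -- lower bound on the distance to y
    have hlow : 2*a*(d:ℝ)/k ≤ ‖y - pt N k r y2 j‖ := by
      have h2 : 4*a*(d:ℝ)/k ≤ ‖pt N k r y2 j - pt N k r y2 j₀‖ := by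
        rw [hnorm, habs]
        have hs : 2*(d:ℝ)/k ≤ Real.sin (Real.pi * m / k) := by
          have := hsin; rw [← hd] at this; exact this
        calc 4*a*(d:ℝ)/k = 2*a*(2*(d:ℝ)/k) := by ring
        _ ≤ 2*r*(Real.sin (Real.pi * m / k)) := by
            apply mul_le_mul (by linarith) hs (by positivity) (by linarith)
        _ = 2*r*Real.sin (Real.pi * (m:ℝ) / k) := by norm_num
      have htri : ‖pt N k r y2 j - pt N k r y2 j₀‖ ≤ 2 * ‖y - pt N k r y2 j‖ := by
        have t1 := dist_triangle (pt N k r y2 j) y (pt N k r y2 j₀)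
        rw [dist_eq_norm, dist_eq_norm, dist_eq_norm] at t1
        have t2 : ‖pt N k r y2 j - y‖ = ‖y - pt N k r y2 j‖ := norm_sub_rev _ _
        have t3 : ‖y - pt N k r y2 j₀‖ ≤ ‖y - pt N k r y2 j‖ :=
          hj₀min j (Finset.mem_range.mpr hjk)
        linarith
      have hhalf : 4*a*(d:ℝ)/k = 2*(2*a*(d:ℝ)/k) := by ring
      linarith
    -- bound on the base
    have h6 : (k:ℝ)^(1/τ) * (1/(k:ℝ)) = (k:ℝ)^(1/τ - 1) := by
      rw [Real.rpow_sub hk0, Real.rpow_one]; ring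
    have hX : (2*a*L0) * (d:ℝ) * (k:ℝ)^(1/τ - 1) ≤ 1 + l * ‖y - pt N k r y2 j‖ := by
      have hpow : (k:ℝ) ^ (((N:ℝ)-2)/((N:ℝ)-4)) = (k:ℝ)^(1/τ) := by
        rw [hτdef, tau, one_div_div]
      rw [hpow] at hl
      have h5 : (L0 * (k:ℝ)^(1/τ)) * (2*a*(d:ℝ)/k) ≤ l * ‖y - pt N k r y2 j‖ :=
        mul_le_mul hl hlow (by positivity) hl0.le
      calc (2*a*L0) * (d:ℝ) * (k:ℝ)^(1/τ-1)
          = (L0 * (k:ℝ)^(1/τ)) * (2*a*(d:ℝ)/k) := by rw [← h6]; field_simp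
      _ ≤ l * ‖y - pt N k r y2 j‖ := h5
      _ ≤ 1 + l * ‖y - pt N k r y2 j‖ := by linarith
    have hXpos : (0:ℝ) < (2*a*L0) * (d:ℝ) * (k:ℝ)^(1/τ - 1) := by positivity
    have hb := Real.rpow_le_rpow_of_nonpos hXpos hX (neg_nonpos.mpr hτ0.le)
    have hexp : ((2*a*L0) * (d:ℝ) * (k:ℝ)^(1/τ - 1))^(-τ)
        = c1 * ((d:ℝ))^(-τ) * (k:ℝ)^(τ-1) := by
      rw [Real.mul_rpow (by positivity) (by positivity),
        Real.mul_rpow (by positivity) (by positivity)]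
      have hkk : ((k:ℝ)^(1/τ - 1))^(-τ) = (k:ℝ)^(τ-1) := by
        rw [← Real.rpow_mul hk0.le]
        congr 1
        field_simp
        ring
      rw [hkk, ← hc1]
    have hdsum : ((d:ℕ):ℝ)^(-τ) ≤ ((m:ℕ):ℝ)^(-τ) + (((k - m:ℕ)):ℝ)^(-τ) := by
      rcases le_total m (k-m) with h | h
      · have hde : d = m := by omega
        rw [hde]
        have : (0:ℝ) ≤ (((k - m:ℕ)):ℝ)^(-τ) := by positivity
        linarith
      · have hde : d = k - m := by omega
        rw [hde]
        have : (0:ℝ) ≤ ((m:ℕ):ℝ)^(-τ) := by positivity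
        linarith
    calc (1 + l * ‖y - pt N k r y2 j‖) ^ (-τ)
        ≤ ((2*a*L0) * (d:ℝ) * (k:ℝ)^(1/τ - 1))^(-τ) := hb
    _ = c1 * ((d:ℝ))^(-τ) * (k:ℝ)^(τ-1) := hexp
    _ = c1 * (k:ℝ)^(τ-1) * ((d:ℝ))^(-τ) := by ring
    _ ≤ c1 * (k:ℝ)^(τ-1) * (((m:ℕ):ℝ)^(-τ) + (((k - m:ℕ)):ℝ)^(-τ)) := by
        apply mul_le_mul_of_nonneg_left hdsum (by positivity)
  -- assemble the sum
  have hS := sum_icc_rpow_le τ hτ0 hτ1 k hk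
  set S := ∑ m ∈ Finset.Icc 1 k, ((m:ℝ))^(-τ) with hSdef
  have hS0 : 0 ≤ S :=
    Finset.sum_nonneg fun _ _ => Real.rpow_nonneg (Nat.cast_nonneg _) _
  have hkpow : (0:ℝ) < (k:ℝ)^(τ-1) := Real.rpow_pos_of_pos hk0 _
  have hmaps1 : ∀ j, j < k → j ≠ j₀ → Nat.dist j j₀ ∈ Finset.Icc 1 k := by
    intro j h1 h2; rw [Finset.mem_Icc, hdist]; omega
  have hmaps2 : ∀ j, j < k → j ≠ j₀ → k - Nat.dist j j₀ ∈ Finset.Icc 1 k := by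
    intro j h1 h2; rw [Finset.mem_Icc, hdist]; omega
  have side : ∀ s : Finset ℕ, (∀ j ∈ s, j < k ∧ j ≠ j₀) →
      (∀ x ∈ s, ∀ x' ∈ s, Nat.dist x j₀ = Nat.dist x' j₀ → x = x') →
      (∀ x ∈ s, ∀ x' ∈ s, k - Nat.dist x j₀ = k - Nat.dist x' j₀ → x = x') →
      ∑ j ∈ s, (1 + l * ‖y - pt N k r y2 j‖)^(-τ) ≤ c1 * (k:ℝ)^(τ-1) * (S + S) := by
    intro s hs hinj1 hinj2
    calc ∑ j ∈ s, (1 + l * ‖y - pt N k r y2 j‖)^(-τ)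
        ≤ ∑ j ∈ s, (c1 * (k:ℝ)^(τ-1) *
            (((Nat.dist j j₀ : ℕ):ℝ)^(-τ) + (((k - Nat.dist j j₀ : ℕ)):ℝ)^(-τ))) :=
          Finset.sum_le_sum fun j hj => key j (hs j hj).1 (hs j hj).2
    _ = c1 * (k:ℝ)^(τ-1) * ((∑ j ∈ s, ((Nat.dist j j₀ : ℕ):ℝ)^(-τ))
          + ∑ j ∈ s, (((k - Nat.dist j j₀ : ℕ)):ℝ)^(-τ)) := by
        rw [← Finset.mul_sum, Finset.sum_add_distrib]
    _ ≤ c1 * (k:ℝ)^(τ-1) * (S + S) := by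
        apply mul_le_mul_of_nonneg_left _ (by positivity)
        apply add_le_add
        · exact sum_injOn_le τ k s (fun j => Nat.dist j j₀) hinj1
            (fun j hj => hmaps1 j (hs j hj).1 (hs j hj).2)
        · exact sum_injOn_le τ k s (fun j => k - Nat.dist j j₀) hinj2
            (fun j hj => hmaps2 j (hs j hj).1 (hs j hj).2)
  have hsplit : ∑ j ∈ Finset.range k, (1 + l * ‖y - pt N k r y2 j‖)^(-τ)
      = (∑ j ∈ Finset.Ico 0 j₀, (1 + l * ‖y - pt N k r y2 j‖)^(-τ))
        + ((1 + l * ‖y - pt N k r y2 j₀‖)^(-τ)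
          + ∑ j ∈ Finset.Ico (j₀+1) k, (1 + l * ‖y - pt N k r y2 j‖)^(-τ)) := by
    rw [Finset.range_eq_Ico, ← Finset.sum_Ico_consecutive _ (Nat.zero_le j₀) hj₀k.le,
      Finset.sum_eq_sum_Ico_succ_bot hj₀k]
  have hmid : (1 + l * ‖y - pt N k r y2 j₀‖)^(-τ) ≤ 1 := by
    apply Real.rpow_le_one_of_one_le_of_nonpos
    · have := mul_nonneg hl0.le (norm_nonneg (y - pt N k r y2 j₀))
      linarith
    · linarith
  have hside1 := side (Finset.Ico 0 j₀)
    (by intro j hj; rw [Finset.mem_Ico] at hj; omega)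
    (by intro x hx x' hx' h; rw [Finset.mem_Ico] at hx hx'; rw [hdist, hdist] at h; omega)
    (by intro x hx x' hx' h; rw [Finset.mem_Ico] at hx hx'; rw [hdist, hdist] at h; omega)
  have hside2 := side (Finset.Ico (j₀+1) k)
    (by intro j hj; rw [Finset.mem_Ico] at hj; omega)
    (by intro x hx x' hx' h; rw [Finset.mem_Ico] at hx hx'; rw [hdist, hdist] at h; omega)
    (by intro x hx x' hx' h; rw [Finset.mem_Ico] at hx hx'; rw [hdist, hdist] at h; omega)
  have h1k : (k:ℝ)^(τ-1) * (k:ℝ)^(1-τ) = 1 := by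
    rw [← Real.rpow_add hk0]; norm_num
  have hbound : (k:ℝ)^(τ-1) * S ≤ 1 + 1/(1-τ) := by
    calc (k:ℝ)^(τ-1) * S ≤ (k:ℝ)^(τ-1) * ((1+1/(1-τ)) * (k:ℝ)^(1-τ)) :=
        mul_le_mul_of_nonneg_left hS hkpow.le
    _ = (1+1/(1-τ)) * ((k:ℝ)^(τ-1) * (k:ℝ)^(1-τ)) := by ring
    _ = 1+1/(1-τ) := by rw [h1k, mul_one]
  rw [hsplit]
  have e1 : c1 * (k:ℝ)^(τ-1) * (S+S) = 2*(c1*((k:ℝ)^(τ-1)*S)) := by ring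
  have hfin : c1*((k:ℝ)^(τ-1)*S) ≤ c1*(1+1/(1-τ)) :=
    mul_le_mul_of_nonneg_left hbound hc1pos.le
  rw [e1] at hside1 hside2
  linarith [hside1, hside2, hmid, hfin]
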